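/- Let A be an n×n complex matrix and suppose there exist complex numbers c_1,...,c_n and e_1,...,e_n such that the matrix D with entries d_{i,j} = a_{i,j} - c_i - e_j is strictly diagonally dominant, i.e., |d_{i,i}| > Σ_{j≠i} |d_{i,j}| for all i. Then rank(A) ≥ n - 2. -/

import Mathlib

open Matrix

lemma matrix_rank_add_le {n : ℕ} (X Y : Matrix (Fin n) (Fin n) ℂ) :
    (X + Y).rank ≤ X.rank + Y.rank := by
  simp only [Matrix.rank]
  have hle : LinearMap.range (X + Y).mulVecLin ≤
      LinearMap.range X.mulVecLin ⊔ LinearMap.range Y.mulVecLin := by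
    rintro v ⟨w, rfl⟩
    exact Submodule.mem_sup.2 ⟨X.mulVecLin w, ⟨w, rfl⟩, Y.mulVecLin w, ⟨w, rfl⟩, by
      simp [Matrix.add_mulVec]⟩
  calc Module.finrank ℂ (LinearMap.range (X + Y).mulVecLin)
      ≤ Module.finrank ℂ ↑(LinearMap.range X.mulVecLin ⊔ LinearMap.range Y.mulVecLin) :=
        Submodule.finrank_mono hle
    _ ≤ _ := Submodule.finrank_add_le_finrank_add_finrank _ _

lemma rank_fun_const_left {n : ℕ} (c : Fin n → ℂ) :
    (Matrix.of fun i (_ : Fin n) => c i).rank ≤ 1 := by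
  have : (Matrix.of fun i (_ : Fin n) => c i) = (Matrix.replicateCol Unit c * Matrix.replicateRow Unit (1 : Fin n → ℂ) : Matrix (Fin n) (Fin n) ℂ) := by
    ext i j; simp [Matrix.mul_apply]
  rw [this]
  exact le_trans (Matrix.rank_mul_le_right _ _)
    (le_trans (Matrix.rank_le_card_height _) (by simp))

lemma rank_fun_const_right {n : ℕ} (e : Fin n → ℂ) :
    (Matrix.of fun (_ : Fin n) j => e j).rank ≤ 1 := by
  have : (Matrix.of fun (_ : Fin n) j => e j) = (Matrix.replicateCol Unit (1 : Fin n → ℂ) * Matrix.replicateRow Unit e : Matrix (Fin n) (Fin n) ℂ) := by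
    ext i j; simp [Matrix.mul_apply]
  rw [this]
  exact le_trans (Matrix.rank_mul_le_right _ _)
    (le_trans (Matrix.rank_le_card_height _) (by simp))

theorem rank_ge_sub_two_of_doubly_shifted_diag_dominant (n : ℕ)
    (A D : Matrix (Fin n) (Fin n) ℂ) (c e : Fin n → ℂ)
    (hD : ∀ i j : Fin n, D i j = A i j - c i - e j)
    (h : ∀ i : Fin n,
      ∑ j ∈ Finset.univ.erase i, ‖D i j‖ < ‖D i i‖) :
    n - 2 ≤ A.rank := by
  have hDrank : D.rank = n := by
    rw [Matrix.rank_of_isUnit]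
    · simp
    · exact (Matrix.isUnit_iff_isUnit_det _).2
        (isUnit_iff_ne_zero.2 (det_ne_zero_of_sum_row_lt_diag (by simpa using h)))
  have hsplit : D = A + ((Matrix.of fun i (_ : Fin n) => -c i) +
      (Matrix.of fun (_ : Fin n) j => -e j)) := by
    ext i j; simp [hD i j]; ring
  have h1 : D.rank ≤ A.rank + (((Matrix.of fun i (_ : Fin n) => -c i) +
      (Matrix.of fun (_ : Fin n) j => -e j)).rank) := by
    rw [hsplit]; exact matrix_rank_add_le _ _
  have h2 := matrix_rank_add_le (Matrix.of fun i (_ : Fin n) => -c i)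
      (Matrix.of fun (_ : Fin n) j => -e j)
  have h3 := rank_fun_const_left (fun i => -c i)
  have h4 := rank_fun_const_right (fun j => -e j)
  omega
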